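/- Let m, n ≥ 1 and let K_{m,n} be the complete bipartite graph with parts U (|U| = m) and V (|V| = n). Let a_1, …, a_k be distinct edges of K_{m,n}, where a_i = {u_i, v_i} with u_i ∈ U and v_i ∈ V. Set G_0 = K_{m,n} and G_i = G_{i−1} − a_i (edge deletion) for i = 1, …, k, and let G = G_k. Then I(G, −1) = Σ_{i=1}^{k} I( G_{i−1} − (N_{G_{i−1}}(u_i) ∪ N_{G_{i−1}}(v_i)), −1 ) − 1, where G_{i−1} − W denotes the induced subgraph on the complement of the vertex set W and N_H(x) is the set of neighbors of x in H. Consequently, if in addition every vertex of G has degree at least 2, then deg h_G = α(G) if and only if Σ_{i=1}^{k} I( G_{i−1} − (N_{G_{i−1}}(u_i) ∪ N_{G_{i−1}}(v_i)), −1 ) ≠ 1. -/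
import Mathlib


open Finset Polynomial

/-- Every subset of a finite type gets a `Fintype` instance (classically). -/
noncomputable instance fintypeOfSet {V : Type*} [Finite V] (s : Set V) : Fintype ↥s :=
  Fintype.ofFinite _

/-- `s` is an independent set of the graph `G`: no two of its vertices are adjacent. -/
def IsIndepSet {V : Type*} (G : SimpleGraph V) (s : Finset V) : Prop :=
  ∀ u ∈ s, ∀ v ∈ s, ¬ G.Adj u v

/-- The finset of all independent sets of `G`. -/
noncomputable def indepFinsets {V : Type*} [Fintype V] (G : SimpleGraph V) :
    Finset (Finset V) :=
  @Finset.filter _ (fun s => IsIndepSet G s) (Classical.decPred _) Finset.univ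

/-- `sCount G i` is the number of independent sets of size `i` in `G`. -/
noncomputable def sCount {V : Type*} [Fintype V] (G : SimpleGraph V) (i : ℕ) : ℕ :=
  ((indepFinsets G).filter (fun s => s.card = i)).card

/-- The independence number `α(G)`: the maximum size of an independent set. -/
noncomputable def indepNum {V : Type*} [Fintype V] (G : SimpleGraph V) : ℕ :=
  (indepFinsets G).sup Finset.card

/-- The independence polynomial `I(G,t) = Σ_i s_i(G) t^i ∈ ℤ[t]`. -/
noncomputable def indepPoly {V : Type*} [Fintype V] (G : SimpleGraph V) : Polynomial ℤ :=
  ∑ i ∈ Finset.range (indepNum G + 1), Polynomial.C (sCount G i : ℤ) * Polynomial.X ^ i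

/-- The h-polynomial of the edge ideal of `G`:
`h_G(t) = Σ_i s_i(G) t^i (1-t)^{α(G)-i} ∈ ℤ[t]`. -/
noncomputable def hPoly {V : Type*} [Fintype V] (G : SimpleGraph V) : Polynomial ℤ :=
  ∑ i ∈ Finset.range (indepNum G + 1),
    Polynomial.C (sCount G i : ℤ) * Polynomial.X ^ i *
      (1 - Polynomial.X) ^ (indepNum G - i)

/-- The degree of a vertex in a finite simple graph. -/
noncomputable def deg {V : Type*} [Fintype V] (G : SimpleGraph V) (v : V) : ℕ :=
  (@Finset.filter _ (fun u => G.Adj v u) (Classical.decPred _) Finset.univ).card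

/-- `kmnDel m n u v i` is the graph `G_i` obtained from the complete bipartite graph
`K_{m,n}` by deleting the first `i` of the edges `a_j = {u_j, v_j}`. -/
def kmnDel (m n : ℕ) (u : ℕ → Fin m) (v : ℕ → Fin n) (i : ℕ) :
    SimpleGraph (Fin m ⊕ Fin n) :=
  (completeBipartiteGraph (Fin m) (Fin n)).deleteEdges
    {e | ∃ j < i, e = s(Sum.inl (u j), Sum.inr (v j))}

noncomputable def isum {V : Type*} [Fintype V] (G : SimpleGraph V) : ℤ :=
  ∑ S ∈ indepFinsets G, (-1 : ℤ) ^ S.card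

lemma mem_indepFinsets {V : Type*} [Fintype V] {G : SimpleGraph V} {S : Finset V} :
    S ∈ indepFinsets G ↔ IsIndepSet G S := by
  classical
  simp [indepFinsets]

lemma eval_indepPoly_neg_one {V : Type*} [Fintype V] (G : SimpleGraph V) :
    (indepPoly G).eval (-1) = isum G := by
  classical
  have hmaps : ∀ S ∈ indepFinsets G, S.card ∈ Finset.range (indepNum G + 1) := by
    intro S hS
    simp only [Finset.mem_range, Nat.lt_succ_iff]
    exact Finset.le_sup (f := Finset.card) hS
  have := Finset.sum_fiberwise_of_maps_to (t := Finset.range (indepNum G + 1))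
    (g := Finset.card) hmaps (fun S => (-1 : ℤ) ^ S.card)
  rw [isum, ← this, indepPoly]
  simp only [eval_finset_sum, eval_mul, eval_C, eval_pow, eval_X]
  refine Finset.sum_congr rfl fun i _ => ?_
  rw [sCount]
  rw [Finset.sum_congr rfl (fun S hS => by
    rw [(Finset.mem_filter.1 hS).2])]
  rw [Finset.sum_const, nsmul_eq_mul]

lemma isum_induce {V : Type*} [Fintype V] (G : SimpleGraph V) (s : Set V) [DecidablePred (· ∈ s)] :
    isum (G.induce s) =
      ∑ S ∈ (indepFinsets G).filter (fun S => ∀ x ∈ S, x ∈ s), (-1 : ℤ) ^ S.card := by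
  classical
  rw [isum]
  refine Finset.sum_nbij' (i := fun T => T.map ⟨Subtype.val, Subtype.val_injective⟩)
    (j := fun S => S.preimage Subtype.val Subtype.val_injective.injOn) ?_ ?_ ?_ ?_ ?_
  · intro T hT
    rw [mem_indepFinsets] at hT
    simp only [Finset.mem_filter]
    constructor
    · rw [mem_indepFinsets]
      intro x hx y hy hadj
      simp only [Finset.mem_map, Function.Embedding.coeFn_mk] at hx hy
      obtain ⟨x', hx', rfl⟩ := hx
      obtain ⟨y', hy', rfl⟩ := hy
      exact hT x' hx' y' hy' hadj
    · intro x hx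
      simp only [Finset.mem_map, Function.Embedding.coeFn_mk] at hx
      obtain ⟨x', _, rfl⟩ := hx
      exact x'.2
  · intro S hS
    simp only [Finset.mem_filter] at hS
    rw [mem_indepFinsets]
    intro x hx y hy hadj
    rw [Finset.mem_preimage] at hx hy
    exact (mem_indepFinsets.1 hS.1) x hx y hy hadj
  · intro T _
    ext x
    simp
  · intro S hS
    simp only [Finset.mem_filter] at hS
    ext x
    simp only [Finset.mem_map, Finset.mem_preimage, Function.Embedding.coeFn_mk]
    constructor
    · rintro ⟨x', hx', rfl⟩; exact hx'
    · intro hx; exact ⟨⟨x, hS.2 x hx⟩, hx, rfl⟩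
  · intro T _
    rw [Finset.card_map]

section step
variable {m n : ℕ} (u : ℕ → Fin m) (v : ℕ → Fin n) (i : ℕ)

lemma kmnDel_adj {a b : Fin m ⊕ Fin n} :
    (kmnDel m n u v i).Adj a b ↔
      (completeBipartiteGraph (Fin m) (Fin n)).Adj a b ∧
        ∀ j < i, s(a, b) ≠ s(Sum.inl (u j), Sum.inr (v j)) := by
  simp only [kmnDel, SimpleGraph.deleteEdges_adj, Set.mem_setOf_eq]
  push_neg
  tauto

lemma kmnDel_succ_adj {a b : Fin m ⊕ Fin n} :
    (kmnDel m n u v (i + 1)).Adj a b ↔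
      (kmnDel m n u v i).Adj a b ∧ s(a, b) ≠ s(Sum.inl (u i), Sum.inr (v i)) := by
  simp only [kmnDel_adj]
  constructor
  · rintro ⟨hc, h⟩
    exact ⟨⟨hc, fun j hj => h j (Nat.lt_succ_of_lt hj)⟩, h i (Nat.lt_succ_self i)⟩
  · rintro ⟨⟨hc, h⟩, hi⟩
    refine ⟨hc, fun j hj => ?_⟩
    rcases Nat.lt_succ_iff_lt_or_eq.1 hj with hj | rfl
    · exact h j hj
    · exact hi

lemma isum_step (hnew : ∀ j < i, ¬(u j = u i ∧ v j = v i)) :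
    isum (kmnDel m n u v (i + 1)) = isum (kmnDel m n u v i) +
      isum ((kmnDel m n u v i).induce
        (((kmnDel m n u v i).neighborSet (Sum.inl (u i)) ∪
          (kmnDel m n u v i).neighborSet (Sum.inr (v i)))ᶜ)) := by
  classical
  set G := kmnDel m n u v i with hG
  set a : Fin m ⊕ Fin n := Sum.inl (u i) with ha
  set b : Fin m ⊕ Fin n := Sum.inr (v i) with hb
  set s : Set (Fin m ⊕ Fin n) := (G.neighborSet a ∪ G.neighborSet b)ᶜ with hs
  have hab : a ≠ b := by simp [ha, hb]
  have hGab : G.Adj a b := by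
    rw [hG, kmnDel_adj]
    refine ⟨by simp [ha, hb], fun j hj heq => ?_⟩
    rw [Sym2.eq_iff] at heq
    rcases heq with ⟨h1, h2⟩ | ⟨h1, h2⟩
    · exact hnew j hj ⟨(Sum.inl_injective h1).symm, (Sum.inr_injective h2).symm⟩
    · exact absurd h1 (by simp [ha])
  have hG'adj : ∀ x y, (kmnDel m n u v (i + 1)).Adj x y ↔ G.Adj x y ∧ s(x, y) ≠ s(a, b) :=
    fun x y => kmnDel_succ_adj u v i
  have hmem_s : ∀ x, x ∈ s ↔ ¬G.Adj a x ∧ ¬G.Adj b x := by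
    intro x
    simp only [hs, Set.mem_compl_iff, Set.mem_union, SimpleGraph.mem_neighborSet, not_or]
  have ha_not_s : a ∉ s := fun h => ((hmem_s a).1 h).2 hGab.symm
  have hb_not_s : b ∉ s := fun h => ((hmem_s b).1 h).1 hGab
  have key : ∀ x y : Fin m ⊕ Fin n, s(x, y) = s(a, b) ↔ (x = a ∧ y = b) ∨ (x = b ∧ y = a) :=
    fun x y => Sym2.eq_iff
  have h1 : (indepFinsets (kmnDel m n u v (i + 1))).filter (fun S => ¬(a ∈ S ∧ b ∈ S)) =
      indepFinsets G := by
    ext S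
    simp only [Finset.mem_filter, mem_indepFinsets]
    constructor
    · rintro ⟨hS, hab'⟩
      intro x hx y hy hGxy
      have hne : s(x, y) = s(a, b) := by
        by_contra hne
        exact hS x hx y hy ((hG'adj x y).2 ⟨hGxy, hne⟩)
      rcases (key x y).1 hne with ⟨rfl, rfl⟩ | ⟨rfl, rfl⟩
      · exact hab' ⟨hx, hy⟩
      · exact hab' ⟨hy, hx⟩
    · intro hS
      refine ⟨fun x hx y hy hadj => hS x hx y hy ((hG'adj x y).1 hadj).1, fun hmem => ?_⟩
      exact hS a hmem.1 b hmem.2 hGab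
  have h2 : ∑ S ∈ (indepFinsets (kmnDel m n u v (i + 1))).filter (fun S => a ∈ S ∧ b ∈ S),
        (-1 : ℤ) ^ S.card =
      ∑ T ∈ (indepFinsets G).filter (fun T => ∀ x ∈ T, x ∈ s), (-1 : ℤ) ^ T.card := by
    refine Finset.sum_nbij' (i := fun S => (S.erase a).erase b)
      (j := fun T => insert a (insert b T)) ?_ ?_ ?_ ?_ ?_
    · intro S hS
      rw [Finset.mem_filter, mem_indepFinsets] at hS
      obtain ⟨hind, haS, hbS⟩ := hS
      have hmemT : ∀ x, x ∈ (S.erase a).erase b ↔ x ≠ b ∧ x ≠ a ∧ x ∈ S := by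
        intro x; simp [Finset.mem_erase, and_assoc]
      rw [Finset.mem_filter, mem_indepFinsets]
      constructor
      · intro x hx y hy hGxy
        rw [hmemT] at hx hy
        have hne : s(x, y) ≠ s(a, b) := by
          intro h
          rcases (key x y).1 h with ⟨rfl, _⟩ | ⟨rfl, _⟩
          · exact hx.2.1 rfl
          · exact hx.1 rfl
        exact hind x hx.2.2 y hy.2.2 ((hG'adj x y).2 ⟨hGxy, hne⟩)
      · intro x hx
        rw [hmemT] at hx
        rw [hmem_s]
        constructor
        · intro hax
          have hne : s(a, x) ≠ s(a, b) := by
            intro h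
            rcases (key a x).1 h with ⟨_, rfl⟩ | ⟨h1, _⟩
            · exact hx.1 rfl
            · exact hab h1
          exact hind a haS x hx.2.2 ((hG'adj a x).2 ⟨hax, hne⟩)
        · intro hbx
          have hne : s(b, x) ≠ s(a, b) := by
            intro h
            rcases (key b x).1 h with ⟨h1, _⟩ | ⟨_, rfl⟩
            · exact hab h1.symm
            · exact hx.2.1 rfl
          exact hind b hbS x hx.2.2 ((hG'adj b x).2 ⟨hbx, hne⟩)
    · intro T hT
      rw [Finset.mem_filter, mem_indepFinsets] at hT
      obtain ⟨hind, hsub⟩ := hT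
      rw [Finset.mem_filter, mem_indepFinsets]
      refine ⟨?_, Finset.mem_insert_self a _,
        Finset.mem_insert_of_mem (Finset.mem_insert_self b _)⟩
      intro x hx y hy hadj
      obtain ⟨hGxy, hne⟩ := (hG'adj x y).1 hadj
      simp only [Finset.mem_insert] at hx hy
      rcases hx with rfl | rfl | hx
      · rcases hy with rfl | rfl | hy
        · exact G.irrefl hGxy
        · exact hne ((key a b).2 (Or.inl ⟨rfl, rfl⟩))
        · exact ((hmem_s y).1 (hsub y hy)).1 hGxy
      · rcases hy with rfl | rfl | hy
        · exact hne ((key b a).2 (Or.inr ⟨rfl, rfl⟩))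
        · exact G.irrefl hGxy
        · exact ((hmem_s y).1 (hsub y hy)).2 hGxy
      · rcases hy with rfl | rfl | hy
        · exact ((hmem_s x).1 (hsub x hx)).1 hGxy.symm
        · exact ((hmem_s x).1 (hsub x hx)).2 hGxy.symm
        · exact hind x hx y hy hGxy
    · intro S hS
      rw [Finset.mem_filter] at hS
      obtain ⟨_, haS, hbS⟩ := hS
      ext x
      simp only [Finset.mem_insert, Finset.mem_erase]
      constructor
      · rintro (rfl | rfl | ⟨_, _, h⟩)
        · exact haS
        · exact hbS
        · exact h
      · intro hx
        by_cases hxa : x = a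
        · exact Or.inl hxa
        · by_cases hxb : x = b
          · exact Or.inr (Or.inl hxb)
          · exact Or.inr (Or.inr ⟨hxb, hxa, hx⟩)
    · intro T hT
      rw [Finset.mem_filter] at hT
      have haT : a ∉ T := fun h => ha_not_s (hT.2 a h)
      have hbT : b ∉ T := fun h => hb_not_s (hT.2 b h)
      ext x
      simp only [Finset.mem_insert, Finset.mem_erase]
      constructor
      · rintro ⟨hxb, hxa, rfl | rfl | h⟩
        · exact absurd rfl hxa
        · exact absurd rfl hxb
        · exact h
      · intro hx
        exact ⟨fun h => hbT (h ▸ hx), fun h => haT (h ▸ hx), Or.inr (Or.inr hx)⟩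
    · intro S hS
      rw [Finset.mem_filter] at hS
      obtain ⟨_, haS, hbS⟩ := hS
      have hb' : b ∈ S.erase a := Finset.mem_erase.2 ⟨fun h => hab h.symm, hbS⟩
      have h1' : (S.erase a).card = S.card - 1 := Finset.card_erase_of_mem haS
      have h2' : ((S.erase a).erase b).card = (S.erase a).card - 1 :=
        Finset.card_erase_of_mem hb'
      have hpos : 0 < (S.erase a).card := Finset.card_pos.2 ⟨b, hb'⟩
      have hpos2 : 0 < S.card := Finset.card_pos.2 ⟨a, haS⟩
      have hcard : S.card = ((S.erase a).erase b).card + 2 := by omega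
      rw [hcard, pow_add]
      norm_num
  have split := Finset.sum_filter_add_sum_filter_not (indepFinsets (kmnDel m n u v (i + 1)))
    (fun S => a ∈ S ∧ b ∈ S) (fun S => (-1 : ℤ) ^ S.card)
  rw [isum, ← split, h2, h1]
  rw [isum_induce G s, ← isum]
  rw [add_comm]
  exact congrArg _ (Finset.sum_congr (by convert rfl) fun _ _ => rfl)
end step

lemma isum_kmnDel_zero {m n : ℕ} (hm : 1 ≤ m) (hn : 1 ≤ n) (u : ℕ → Fin m) (v : ℕ → Fin n) :
    isum (kmnDel m n u v 0) = -1 := by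
  classical
  have hadj : ∀ x y : Fin m ⊕ Fin n, (kmnDel m n u v 0).Adj x y ↔
      (x.isLeft ∧ y.isRight ∨ x.isRight ∧ y.isLeft) := by
    intro x y
    rw [kmnDel_adj]
    simp
  set A : Finset (Fin m ⊕ Fin n) := Finset.univ.image Sum.inl with hA
  set B : Finset (Fin m ⊕ Fin n) := Finset.univ.image Sum.inr with hB
  have hmemA : ∀ z : Fin m ⊕ Fin n, z ∈ A ↔ z.isLeft := by
    intro z; cases z <;> simp [hA]
  have hmemB : ∀ z : Fin m ⊕ Fin n, z ∈ B ↔ z.isRight := by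
    intro z; cases z <;> simp [hB]
  have hind : indepFinsets (kmnDel m n u v 0) = A.powerset ∪ B.powerset := by
    ext S
    rw [Finset.mem_union, mem_indepFinsets, Finset.mem_powerset, Finset.mem_powerset]
    constructor
    · intro hS
      by_cases h : ∀ z ∈ S, z.isLeft = true
      · exact Or.inl (fun z hz => (hmemA z).2 (h z hz))
      · push_neg at h
        obtain ⟨z, hzS, hz⟩ := h
        have hzr : z.isRight := by cases z <;> simp_all
        refine Or.inr (fun w hw => (hmemB w).2 ?_)
        by_contra hwr
        have hwl : w.isLeft := by cases w <;> simp_all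
        exact hS w hw z hzS ((hadj w z).2 (Or.inl ⟨hwl, hzr⟩))
    · rintro (h | h) x hx y hy hadj'
      · rcases (hadj x y).1 hadj' with ⟨h1, h2⟩ | ⟨h1, h2⟩
        · have := (hmemA y).1 (h hy); cases y <;> simp_all
        · have := (hmemA x).1 (h hx); cases x <;> simp_all
      · rcases (hadj x y).1 hadj' with ⟨h1, h2⟩ | ⟨h1, h2⟩
        · have := (hmemB x).1 (h hx); cases x <;> simp_all
        · have := (hmemB y).1 (h hy); cases y <;> simp_all
  have hinter : A.powerset ∩ B.powerset = {∅} := by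
    ext S
    simp only [Finset.mem_inter, Finset.mem_powerset, Finset.mem_singleton]
    constructor
    · rintro ⟨h1, h2⟩
      ext x
      simp only [Finset.notMem_empty, iff_false]
      intro hx
      have h3 := (hmemA x).1 (h1 hx)
      have h4 := (hmemB x).1 (h2 hx)
      cases x <;> simp_all
    · rintro rfl; simp
  have hAne : A.Nonempty := ⟨Sum.inl ⟨0, hm⟩, by simp [hA]⟩
  have hBne : B.Nonempty := ⟨Sum.inr ⟨0, hn⟩, by simp [hB]⟩
  have hkey := Finset.sum_union_inter (s₁ := A.powerset) (s₂ := B.powerset)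
    (f := fun S => (-1 : ℤ) ^ S.card)
  rw [hinter, Finset.sum_singleton,
    Finset.sum_powerset_neg_one_pow_card_of_nonempty hAne,
    Finset.sum_powerset_neg_one_pow_card_of_nonempty hBne] at hkey
  rw [isum, hind]
  simp only [Finset.card_empty, pow_zero] at hkey
  linarith

lemma isum_telescope {m n : ℕ} (hm : 1 ≤ m) (hn : 1 ≤ n) (u : ℕ → Fin m) (v : ℕ → Fin n)
    (k : ℕ) (hdist : ∀ i < k, ∀ j < k, u i = u j → v i = v j → i = j) :
    isum (kmnDel m n u v k) =
      (∑ i ∈ Finset.range k,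
        isum ((kmnDel m n u v i).induce
          (((kmnDel m n u v i).neighborSet (Sum.inl (u i)) ∪
            (kmnDel m n u v i).neighborSet (Sum.inr (v i)))ᶜ))) - 1 := by
  induction k with
  | zero => simpa using isum_kmnDel_zero hm hn u v
  | succ k ih =>
    have hdist' : ∀ i < k, ∀ j < k, u i = u j → v i = v j → i = j :=
      fun i hi j hj => hdist i (Nat.lt_succ_of_lt hi) j (Nat.lt_succ_of_lt hj)
    have hnew : ∀ j < k, ¬(u j = u k ∧ v j = v k) := by
      rintro j hj ⟨h1, h2⟩
      exact absurd (hdist j (Nat.lt_succ_of_lt hj) k (Nat.lt_succ_self k) h1 h2)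
        (Nat.ne_of_lt hj)
    rw [isum_step u v k hnew, ih hdist', Finset.sum_range_succ]
    ring

lemma coeff_one_sub_pow (d : ℕ) : ((1 - X : Polynomial ℤ) ^ d).coeff d = (-1) ^ d := by
  induction d with
  | zero => simp
  | succ d ih =>
    have hdeg : ((1 - X : Polynomial ℤ) ^ d).natDegree < d + 1 := by
      have h1 : (1 - X : Polynomial ℤ).natDegree ≤ 1 := by
        refine le_trans (natDegree_sub_le _ _) ?_
        simp
      calc ((1 - X : Polynomial ℤ) ^ d).natDegree ≤ d * (1 - X : Polynomial ℤ).natDegree :=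
            natDegree_pow_le
        _ ≤ d * 1 := Nat.mul_le_mul_left d h1
        _ < d + 1 := by omega
    rw [pow_succ, mul_one_sub, coeff_sub, coeff_mul_X, ih,
      coeff_eq_zero_of_natDegree_lt hdeg, pow_succ]
    ring

lemma sCount_zero {V : Type*} [Fintype V] (G : SimpleGraph V) : sCount G 0 = 1 := by
  classical
  rw [sCount]
  have : (indepFinsets G).filter (fun s => s.card = 0) = {∅} := by
    ext S
    simp only [Finset.mem_filter, Finset.mem_singleton, Finset.card_eq_zero, mem_indepFinsets]
    constructor
    · rintro ⟨_, rfl⟩; rfl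
    · rintro rfl
      exact ⟨fun x hx => absurd hx (Finset.notMem_empty x), rfl⟩
  rw [this, Finset.card_singleton]

lemma hPoly_natDegree_iff {V : Type*} [Fintype V] (G : SimpleGraph V) :
    (hPoly G).natDegree = indepNum G ↔ (indepPoly G).eval (-1) ≠ 0 := by
  classical
  set α := indepNum G with hα
  have hle : (hPoly G).natDegree ≤ α := by
    rw [hPoly]
    refine natDegree_sum_le_of_forall_le _ _ fun i hi => ?_
    rw [Finset.mem_range, Nat.lt_succ_iff] at hi
    calc (C (sCount G i : ℤ) * X ^ i * (1 - X) ^ (α - i)).natDegree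
        ≤ (C (sCount G i : ℤ) * X ^ i).natDegree + ((1 - X : Polynomial ℤ) ^ (α - i)).natDegree :=
          natDegree_mul_le
      _ ≤ i + (α - i) * 1 := by
          gcongr
          · exact le_trans (natDegree_C_mul_le _ _) (by simp)
          · exact le_trans natDegree_pow_le (by
              gcongr
              refine le_trans (natDegree_sub_le _ _) ?_
              simp)
      _ ≤ α := by omega
  have hcoeff : (hPoly G).coeff α = (-1) ^ α * (indepPoly G).eval (-1) := by
    rw [hPoly, finset_sum_coeff, indepPoly, eval_finset_sum, Finset.mul_sum]
    refine Finset.sum_congr rfl fun i hi => ?_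
    rw [Finset.mem_range, Nat.lt_succ_iff] at hi
    have hterm : (X ^ i * (1 - X) ^ (α - i) : Polynomial ℤ).coeff α = (-1) ^ (α - i) := by
      have hc := coeff_X_pow_mul ((1 - X : Polynomial ℤ) ^ (α - i)) i (α - i)
      rw [Nat.sub_add_cancel hi] at hc
      rw [hc, coeff_one_sub_pow]
    rw [mul_assoc, coeff_C_mul, hterm]
    simp only [eval_mul, eval_C, eval_pow, eval_X]
    have h2 : ((-1 : ℤ) ^ i) * ((-1 : ℤ) ^ i) = 1 := by
      rw [← mul_pow]; norm_num
    have h1 : ((-1 : ℤ)) ^ (α - i) * (-1) ^ i = (-1) ^ α := by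
      rw [← pow_add, Nat.sub_add_cancel hi]
    calc (sCount G i : ℤ) * (-1) ^ (α - i)
        = (sCount G i : ℤ) * ((-1) ^ (α - i) * ((-1) ^ i * (-1) ^ i)) := by rw [h2, mul_one]
      _ = (-1) ^ α * ((sCount G i : ℤ) * (-1) ^ i) := by rw [← mul_assoc ((-1:ℤ)^(α-i)), h1]; ring
  have hcoeff0 : (hPoly G).coeff 0 = 1 := by
    rw [coeff_zero_eq_eval_zero, hPoly, eval_finset_sum]
    rw [Finset.sum_eq_single 0]
    · simp [sCount_zero]
    · intro i _ hi
      simp [zero_pow hi]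
    · intro h
      exact absurd (Finset.mem_range.2 (Nat.succ_pos α)) h
  constructor
  · intro hdeg heval
    rw [heval, mul_zero] at hcoeff
    have hzero : hPoly G = 0 := by
      rw [← leadingCoeff_eq_zero, leadingCoeff, hdeg]
      exact hcoeff
    rw [hzero, coeff_zero] at hcoeff0
    norm_num at hcoeff0
  · intro hne
    refine le_antisymm hle (le_natDegree_of_ne_zero ?_)
    rw [hcoeff]
    exact mul_ne_zero (pow_ne_zero _ (by norm_num)) hne


/-- Let `G = G_k` be obtained from `K_{m,n}` by successively deleting
distinct edges `a_1, …, a_k`, `a_i = {u_i, v_i}`.  Then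
`I(G,-1) = Σ_{i=1}^{k} I(G_{i-1} - (N_{G_{i-1}}(u_i) ∪ N_{G_{i-1}}(v_i)), -1) - 1`;
consequently, if moreover every vertex of `G` has degree at least `2`, then
`deg h_G = α(G)` iff that sum is `≠ 1`. -/
theorem eval_indepPoly_kmn_deleteEdges (m n k : ℕ) (hm : 1 ≤ m) (hn : 1 ≤ n)
    (u : ℕ → Fin m) (v : ℕ → Fin n)
    (hdist : ∀ i < k, ∀ j < k, u i = u j → v i = v j → i = j) :
    (indepPoly (kmnDel m n u v k)).eval (-1) =
      (∑ i ∈ Finset.range k,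
        (indepPoly ((kmnDel m n u v i).induce
          (((kmnDel m n u v i).neighborSet (Sum.inl (u i)) ∪
            (kmnDel m n u v i).neighborSet (Sum.inr (v i)))ᶜ))).eval (-1)) - 1 ∧
    ((∀ w, 2 ≤ deg (kmnDel m n u v k) w) →
      ((hPoly (kmnDel m n u v k)).natDegree = indepNum (kmnDel m n u v k) ↔
        (∑ i ∈ Finset.range k,
          (indepPoly ((kmnDel m n u v i).induce
            (((kmnDel m n u v i).neighborSet (Sum.inl (u i)) ∪
              (kmnDel m n u v i).neighborSet (Sum.inr (v i)))ᶜ))).eval (-1)) ≠ 1)) := by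
  classical
  have hsum : (∑ i ∈ Finset.range k,
      (indepPoly ((kmnDel m n u v i).induce
        (((kmnDel m n u v i).neighborSet (Sum.inl (u i)) ∪
          (kmnDel m n u v i).neighborSet (Sum.inr (v i)))ᶜ))).eval (-1)) =
      ∑ i ∈ Finset.range k,
        isum ((kmnDel m n u v i).induce
          (((kmnDel m n u v i).neighborSet (Sum.inl (u i)) ∪
            (kmnDel m n u v i).neighborSet (Sum.inr (v i)))ᶜ)) :=
    Finset.sum_congr rfl fun i _ => eval_indepPoly_neg_one _
  constructor
  · rw [hsum, eval_indepPoly_neg_one, isum_telescope hm hn u v k hdist]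
  · intro _
    rw [hPoly_natDegree_iff, hsum, eval_indepPoly_neg_one,
      isum_telescope hm hn u v k hdist, sub_ne_zero]
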